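/- Let a, b ∈ ℝ. There is a 5-dimensional real Lie algebra 𝔤 with basis e₁,...,e₅ and dual basis e¹,...,e⁵ whose Chevalley–Eilenberg differentials satisfy (writing e^{ij} for eⁱ∧eʲ): de¹ = de² = 0, de³ = a e^{13} + b e^{14} − b e^{23} + a e^{24} − (a² + b²) e^{25}, de⁴ = b e^{13} − a e^{14} − (a² + b²) e^{15} + a e^{23} + b e^{24}, de⁵ = −2e^{14} − 2e^{23} (i.e., the bracket determined by these equations satisfies the Jacobi identity). Moreover, 𝔤 is solvable, the quadruplet η = e⁵, ω₁ = e^{12} + e^{34}, ω₂ = e^{13} − e^{24}, ω₃ = e^{14} + e^{23} is a hypo-contact structure on 𝔤; if a = b = 0 then 𝔤 is isomorphic to the nilpotent Lie algebra 𝔥₁, while if (a, b) ≠ (0, 0) then 𝔤 is isomorphic to 𝔥₄. -/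

import Mathlib

noncomputable section

/-- Chevalley–Eilenberg differential of a 1-form on a Lie algebra. -/
def dOne {V : Type*} [LieRing V] [LieAlgebra ℝ V] (α : V → ℝ) (x y : V) : ℝ :=
  -α ⁅x, y⁆

/-- Chevalley–Eilenberg differential of a 2-form on a Lie algebra. -/
def dTwo {V : Type*} [LieRing V] [LieAlgebra ℝ V] (ω : V → V → ℝ) (x y z : V) : ℝ :=
  -ω ⁅x, y⁆ z + ω ⁅x, z⁆ y - ω ⁅y, z⁆ x

/-- Chevalley–Eilenberg differential of a 3-form on a Lie algebra. -/
def dThree {V : Type*} [LieRing V] [LieAlgebra ℝ V] (σ : V → V → V → ℝ)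
    (x y z w : V) : ℝ :=
  -σ ⁅x, y⁆ z w + σ ⁅x, z⁆ y w - σ ⁅x, w⁆ y z
    - σ ⁅y, z⁆ x w + σ ⁅y, w⁆ x z - σ ⁅z, w⁆ x y

/-- Wedge product of two 1-forms, as an alternating bilinear map. -/
def wedge1 {V : Type*} [LieRing V] [LieAlgebra ℝ V] (α β : V →ₗ[ℝ] ℝ) :
    V →ₗ[ℝ] V →ₗ[ℝ] ℝ :=
  LinearMap.mk₂ ℝ (fun x y => α x * β y - α y * β x)
    (fun m₁ m₂ n => by simp [map_add]; ring)
    (fun c m n => by simp [map_smul, smul_eq_mul]; ring)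
    (fun m n₁ n₂ => by simp [map_add]; ring)
    (fun c m n => by simp [map_smul, smul_eq_mul]; ring)

/-- Wedge product of a 1-form and a 2-form. -/
def wedge12 {V : Type*} (α : V → ℝ) (ω : V → V → ℝ) (x y z : V) : ℝ :=
  α x * ω y z - α y * ω x z + α z * ω x y

/-- Wedge product of two 2-forms. -/
def wedge22 {V : Type*} (ω τ : V → V → ℝ) (x y z w : V) : ℝ :=
  ω x y * τ z w - ω x z * τ y w + ω x w * τ y z
    + ω y z * τ x w - ω y w * τ x z + ω z w * τ x y

/-- Wedge product of a 4-form and a 1-form. -/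
def wedge41 {V : Type*} (v : V → V → V → V → ℝ) (α : V → ℝ)
    (x₀ x₁ x₂ x₃ x₄ : V) : ℝ :=
  α x₀ * v x₁ x₂ x₃ x₄ - α x₁ * v x₀ x₂ x₃ x₄ + α x₂ * v x₀ x₁ x₃ x₄
    - α x₃ * v x₀ x₁ x₂ x₄ + α x₄ * v x₀ x₁ x₂ x₃

/-- An SU(2)-structure on a 5-dimensional real Lie algebra. -/
structure IsSU2Structure {V : Type*} [LieRing V] [LieAlgebra ℝ V]
    (η : V →ₗ[ℝ] ℝ) (ω₁ ω₂ ω₃ : V →ₗ[ℝ] V →ₗ[ℝ] ℝ) : Prop where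
  alt1 : ∀ x, ω₁ x x = 0
  alt2 : ∀ x, ω₂ x x = 0
  alt3 : ∀ x, ω₃ x x = 0
  vol : ∃ v : V → V → V → V → ℝ,
    wedge22 (fun a b => ω₁ a b) (fun a b => ω₁ a b) = v ∧
    wedge22 (fun a b => ω₂ a b) (fun a b => ω₂ a b) = v ∧
    wedge22 (fun a b => ω₃ a b) (fun a b => ω₃ a b) = v ∧
    wedge22 (fun a b => ω₁ a b) (fun a b => ω₂ a b) = (fun _ _ _ _ => 0) ∧
    wedge22 (fun a b => ω₁ a b) (fun a b => ω₃ a b) = (fun _ _ _ _ => 0) ∧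
    wedge22 (fun a b => ω₂ a b) (fun a b => ω₃ a b) = (fun _ _ _ _ => 0) ∧
    wedge41 v (fun x => η x) ≠ (fun _ _ _ _ _ => 0)
  compat : ∀ X Y : V, (∀ z, ω₃ X z = ω₁ Y z) → 0 ≤ ω₂ X Y

/-- A hypo-contact structure on a 5-dimensional real Lie algebra. -/
structure IsHypoContact {V : Type*} [LieRing V] [LieAlgebra ℝ V]
    (η : V →ₗ[ℝ] ℝ) (ω₁ ω₂ ω₃ : V →ₗ[ℝ] V →ₗ[ℝ] ℝ)
    extends IsSU2Structure η ω₁ ω₂ ω₃ : Prop where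
  contact : ∀ x y, dOne (fun z => η z) x y = -2 * ω₃ x y
  closed1 : ∀ x y z w, dThree (wedge12 (fun z => η z) (fun a b => ω₁ a b)) x y z w = 0
  closed2 : ∀ x y z w, dThree (wedge12 (fun z => η z) (fun a b => ω₂ a b)) x y z w = 0

/-- The Lie algebra `𝔥₁`. -/
def IsH1 (V : Type*) [LieRing V] [LieAlgebra ℝ V] : Prop :=
  ∃ X : Module.Basis (Fin 5) ℝ V,
    ⁅X 0, X 1⁆ = 0 ∧ ⁅X 0, X 2⁆ = 0 ∧ ⁅X 0, X 3⁆ = X 4 ∧ ⁅X 0, X 4⁆ = 0 ∧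
    ⁅X 1, X 2⁆ = X 4 ∧ ⁅X 1, X 3⁆ = 0 ∧ ⁅X 1, X 4⁆ = 0 ∧
    ⁅X 2, X 3⁆ = 0 ∧ ⁅X 2, X 4⁆ = 0 ∧ ⁅X 3, X 4⁆ = 0

/-- The Lie algebra `𝔥₂`. -/
def IsH2 (V : Type*) [LieRing V] [LieAlgebra ℝ V] : Prop :=
  ∃ X : Module.Basis (Fin 5) ℝ V,
    ⁅X 0, X 1⁆ = 0 ∧ ⁅X 0, X 2⁆ = 0 ∧ ⁅X 0, X 3⁆ = 0 ∧ ⁅X 0, X 4⁆ = (2 : ℝ) • X 0 ∧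
    ⁅X 1, X 2⁆ = X 0 ∧ ⁅X 1, X 3⁆ = 0 ∧ ⁅X 1, X 4⁆ = X 1 ∧
    ⁅X 2, X 3⁆ = 0 ∧ ⁅X 2, X 4⁆ = X 2 ∧ ⁅X 3, X 4⁆ = (-3 : ℝ) • X 3

/-- The Lie algebra `𝔥₃`. -/
def IsH3 (V : Type*) [LieRing V] [LieAlgebra ℝ V] : Prop :=
  ∃ X : Module.Basis (Fin 5) ℝ V,
    ⁅X 0, X 1⁆ = 0 ∧ ⁅X 0, X 2⁆ = 0 ∧ ⁅X 0, X 3⁆ = (2 : ℝ) • X 0 ∧ ⁅X 0, X 4⁆ = 0 ∧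
    ⁅X 1, X 2⁆ = X 0 ∧ ⁅X 1, X 3⁆ = X 1 ∧ ⁅X 1, X 4⁆ = -X 2 ∧
    ⁅X 2, X 3⁆ = X 2 ∧ ⁅X 2, X 4⁆ = X 1 ∧ ⁅X 3, X 4⁆ = 0

/-- The Lie algebra `𝔥₄`. -/
def IsH4 (V : Type*) [LieRing V] [LieAlgebra ℝ V] : Prop :=
  ∃ X : Module.Basis (Fin 5) ℝ V,
    ⁅X 0, X 1⁆ = 0 ∧ ⁅X 0, X 2⁆ = 0 ∧ ⁅X 0, X 3⁆ = X 0 ∧ ⁅X 0, X 4⁆ = 0 ∧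
    ⁅X 1, X 2⁆ = 0 ∧ ⁅X 1, X 3⁆ = 0 ∧ ⁅X 1, X 4⁆ = X 1 ∧
    ⁅X 2, X 3⁆ = -X 2 ∧ ⁅X 2, X 4⁆ = -X 2 ∧ ⁅X 3, X 4⁆ = 0

/-- The Lie algebra `𝔥₅`. -/
def IsH5 (V : Type*) [LieRing V] [LieAlgebra ℝ V] : Prop :=
  ∃ X : Module.Basis (Fin 5) ℝ V,
    ⁅X 0, X 1⁆ = 0 ∧ ⁅X 0, X 2⁆ = 0 ∧ ⁅X 0, X 3⁆ = 0 ∧ ⁅X 0, X 4⁆ = X 0 ∧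
    ⁅X 1, X 2⁆ = 0 ∧ ⁅X 1, X 3⁆ = X 0 ∧ ⁅X 1, X 4⁆ = 0 ∧
    ⁅X 2, X 3⁆ = X 1 ∧ ⁅X 2, X 4⁆ = -X 2 ∧ ⁅X 3, X 4⁆ = X 3

/-- `e^{ij}`, the wedge of the `i`-th and `j`-th dual basis 1-forms. -/
def bw {V : Type*} [LieRing V] [LieAlgebra ℝ V] (e : Module.Basis (Fin 5) ℝ V) (i j : Fin 5) :
    V →ₗ[ℝ] V →ₗ[ℝ] ℝ :=
  wedge1 (e.coord i) (e.coord j)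

/-- The content of Statement 6: structure equations, solvability, hypo-contact structure
and the isomorphism type, for a Lie algebra `V`. -/
def GoodLieAlgebra6 (a b : ℝ) (V : Type) [LieRing V] [LieAlgebra ℝ V] : Prop :=
  LieAlgebra.IsSolvable V ∧
  ∃ e : Module.Basis (Fin 5) ℝ V,
      (∀ x y : _, dOne (⇑(e.coord 0)) x y = 0) ∧
      (∀ x y : _, dOne (⇑(e.coord 1)) x y = 0) ∧
      (∀ x y : _, dOne (⇑(e.coord 2)) x y = (a) * bw e 0 2 x y + (b) * bw e 0 3 x y + (-b) * bw e 1 2 x y + (a) * bw e 1 3 x y + (-(a^2+b^2)) * bw e 1 4 x y) ∧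
      (∀ x y : _, dOne (⇑(e.coord 3)) x y = (b) * bw e 0 2 x y + (-a) * bw e 0 3 x y + (-(a^2+b^2)) * bw e 0 4 x y + (a) * bw e 1 2 x y + (b) * bw e 1 3 x y) ∧
      (∀ x y : _, dOne (⇑(e.coord 4)) x y = (-2) * bw e 0 3 x y + (-2) * bw e 1 2 x y) ∧
      IsHypoContact (e.coord 4) (bw e 0 1 + bw e 2 3) (bw e 0 2 - bw e 1 3) (bw e 0 3 + bw e 1 2) ∧
      ((a = 0 ∧ b = 0) → IsH1 V) ∧ (¬ (a = 0 ∧ b = 0) → IsH4 V)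

noncomputable section
namespace GLA6aux

/-- bracket -/
def lbr (a b : ℝ) (x y : Fin 5 → ℝ) : Fin 5 → ℝ :=
  ![0, 0,
    -a*(x 0*y 2 - x 2*y 0) - b*(x 0*y 3 - x 3*y 0) + b*(x 1*y 2 - x 2*y 1)
      - a*(x 1*y 3 - x 3*y 1) + (a^2+b^2)*(x 1*y 4 - x 4*y 1),
    -b*(x 0*y 2 - x 2*y 0) + a*(x 0*y 3 - x 3*y 0) + (a^2+b^2)*(x 0*y 4 - x 4*y 0)
      - a*(x 1*y 2 - x 2*y 1) - b*(x 1*y 3 - x 3*y 1),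
    2*(x 0*y 3 - x 3*y 0) + 2*(x 1*y 2 - x 2*y 1)]

lemma lbr_add_left (a b : ℝ) (x y z : Fin 5 → ℝ) :
    lbr a b (x + y) z = lbr a b x z + lbr a b y z := by
  funext k; fin_cases k <;> simp [lbr] <;> ring

lemma lbr_add_right (a b : ℝ) (x y z : Fin 5 → ℝ) :
    lbr a b x (y + z) = lbr a b x y + lbr a b x z := by
  funext k; fin_cases k <;> simp [lbr] <;> ring

lemma lbr_smul (a b : ℝ) (t : ℝ) (x y : Fin 5 → ℝ) :
    lbr a b x (t • y) = t • lbr a b x y := by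
  funext k; fin_cases k <;> simp [lbr] <;> ring

lemma lbr_self (a b : ℝ) (x : Fin 5 → ℝ) : lbr a b x x = 0 := by
  funext k; fin_cases k <;> simp [lbr] <;> ring

lemma lbr_leibniz (a b : ℝ) (x y z : Fin 5 → ℝ) :
    lbr a b x (lbr a b y z) = lbr a b (lbr a b x y) z + lbr a b y (lbr a b x z) := by
  funext k; fin_cases k <;> simp [lbr] <;> ring

abbrev L (a b : ℝ) : Type := Fin 5 → ℝ

instance (a b : ℝ) : AddCommGroup (L a b) := inferInstanceAs (AddCommGroup (Fin 5 → ℝ))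
instance (a b : ℝ) : Module ℝ (L a b) := inferInstanceAs (Module ℝ (Fin 5 → ℝ))

instance (a b : ℝ) : LieRing (L a b) where
  bracket := lbr a b
  add_lie := lbr_add_left a b
  lie_add := lbr_add_right a b
  lie_self := lbr_self a b
  leibniz_lie := lbr_leibniz a b

instance (a b : ℝ) : LieAlgebra ℝ (L a b) where
  lie_smul := lbr_smul a b

lemma lbrk (a b : ℝ) (x y : L a b) : ⁅x, y⁆ = lbr a b x y := rfl

def eqv (a b : ℝ) : L a b ≃ₗ[ℝ] (Fin 5 → ℝ) where
  toFun := fun x => x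
  map_add' := fun _ _ => rfl
  map_smul' := fun _ _ => rfl
  invFun := fun x => x
  left_inv := fun _ => rfl
  right_inv := fun _ => rfl

def eB (a b : ℝ) : Module.Basis (Fin 5) ℝ (L a b) := Module.Basis.ofEquivFun (eqv a b)

lemma eB_coord (a b : ℝ) (i : Fin 5) (x : L a b) : (eB a b).coord i x = x i := by
  simp [eB, Module.Basis.coord_apply, Module.Basis.ofEquivFun_repr_apply, eqv]

lemma eB_apply (a b : ℝ) (i : Fin 5) : eB a b i = (Pi.single i 1 : Fin 5 → ℝ) := by
  simp [eB, Module.Basis.coe_ofEquivFun, eqv]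

end GLA6aux
namespace GLA6aux

lemma eB_repr (a b : ℝ) (x : L a b) (i : Fin 5) : (eB a b).repr x i = x i := by
  simp [eB, Module.Basis.ofEquivFun_repr_apply, eqv]

lemma bw_apply (a b : ℝ) (i j : Fin 5) (x y : L a b) :
    bw (eB a b) i j x y = x i * y j - x j * y i := by
  simp [bw, wedge1, LinearMap.mk₂_apply, Module.Basis.coord_apply, eB_repr]; ring

lemma structure_eqs (a b : ℝ) :
      (∀ x y : L a b, dOne (⇑((eB a b).coord 0)) x y = 0) ∧
      (∀ x y : L a b, dOne (⇑((eB a b).coord 1)) x y = 0) ∧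
      (∀ x y : L a b, dOne (⇑((eB a b).coord 2)) x y = (a) * bw (eB a b) 0 2 x y + (b) * bw (eB a b) 0 3 x y + (-b) * bw (eB a b) 1 2 x y + (a) * bw (eB a b) 1 3 x y + (-(a^2+b^2)) * bw (eB a b) 1 4 x y) ∧
      (∀ x y : L a b, dOne (⇑((eB a b).coord 3)) x y = (b) * bw (eB a b) 0 2 x y + (-a) * bw (eB a b) 0 3 x y + (-(a^2+b^2)) * bw (eB a b) 0 4 x y + (a) * bw (eB a b) 1 2 x y + (b) * bw (eB a b) 1 3 x y) ∧
      (∀ x y : L a b, dOne (⇑((eB a b).coord 4)) x y = (-2) * bw (eB a b) 0 3 x y + (-2) * bw (eB a b) 1 2 x y) := by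
  refine ⟨?_, ?_, ?_, ?_, ?_⟩ <;>
    · intro x y
      simp only [dOne, lbrk, Module.Basis.coord_apply, eB_repr, bw_apply]
      simp [lbr]
      try ring

end GLA6aux
namespace GLA6aux

set_option maxHeartbeats 1000000 in
lemma hypo (a b : ℝ) : IsHypoContact ((eB a b).coord 4)
    (bw (eB a b) 0 1 + bw (eB a b) 2 3) (bw (eB a b) 0 2 - bw (eB a b) 1 3)
    (bw (eB a b) 0 3 + bw (eB a b) 1 2) where
  alt1 := by intro x; simp [bw_apply]; ring
  alt2 := by intro x; simp [bw_apply]; ring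
  alt3 := by intro x; simp [bw_apply]; ring
  vol := by
    refine ⟨_, rfl, ?_, ?_, ?_, ?_, ?_, ?_⟩
    · funext x y z w
      simp only [wedge22, LinearMap.add_apply, LinearMap.sub_apply, bw_apply]; ring
    · funext x y z w
      simp only [wedge22, LinearMap.add_apply, LinearMap.sub_apply, bw_apply]; ring
    · funext x y z w
      simp only [wedge22, LinearMap.add_apply, LinearMap.sub_apply, bw_apply]; ring
    · funext x y z w
      simp only [wedge22, LinearMap.add_apply, LinearMap.sub_apply, bw_apply]; ring
    · funext x y z w
      simp only [wedge22, LinearMap.add_apply, LinearMap.sub_apply, bw_apply]; ring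
    · intro hc
      have h2 := congrFun (congrFun (congrFun (congrFun (congrFun hc
        (eB a b 0)) (eB a b 1)) (eB a b 2)) (eB a b 3)) (eB a b 4)
      simp only [wedge41, wedge22, LinearMap.add_apply, LinearMap.sub_apply, bw_apply,
        Module.Basis.coord_apply, eB_repr, eB_apply] at h2
      simp [Pi.single_apply] at h2
  compat := by
    intro X Y h
    have h0 := h (eB a b 0); have h1 := h (eB a b 1)
    have h2 := h (eB a b 2); have h3 := h (eB a b 3)
    simp only [LinearMap.add_apply, LinearMap.sub_apply, bw_apply, eB_apply] at h0 h1 h2 h3 ⊢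
    simp [Pi.single_apply] at h0 h1 h2 h3 ⊢
    have h5 : Y 2 = X 0 := h3.symm
    have h6 : Y 3 = -X 1 := by linarith
    have h7 : Y 0 = -X 2 := h1.symm
    have h8 : Y 1 = X 3 := h0.symm
    rw [h5, h6, h7, h8]
    nlinarith [sq_nonneg (X 0), sq_nonneg (X 1), sq_nonneg (X 2), sq_nonneg (X 3)]
  contact := by
    intro x y
    simp only [dOne, lbrk, Module.Basis.coord_apply, eB_repr, LinearMap.add_apply, bw_apply]
    simp [lbr]; ring
  closed1 := by
    intro x y z w
    simp only [dThree, wedge12, lbrk, Module.Basis.coord_apply, eB_repr, LinearMap.add_apply,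
      LinearMap.sub_apply, bw_apply]
    simp only [lbr, Matrix.cons_val_zero, Matrix.cons_val_one, Matrix.head_cons,
      Matrix.cons_val_two, Matrix.tail_cons, Matrix.cons_val_three, Matrix.cons_val_four]
    ring
  closed2 := by
    intro x y z w
    simp only [dThree, wedge12, lbrk, Module.Basis.coord_apply, eB_repr, LinearMap.add_apply,
      LinearMap.sub_apply, bw_apply]
    simp only [lbr, Matrix.cons_val_zero, Matrix.cons_val_one, Matrix.head_cons,
      Matrix.cons_val_two, Matrix.tail_cons, Matrix.cons_val_three, Matrix.cons_val_four]
    ring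

end GLA6aux
namespace GLA6aux

lemma Lzero_apply (a b : ℝ) (k : Fin 5) : (0 : L a b) k = 0 := rfl
lemma Ladd_apply (a b : ℝ) (x y : L a b) (k : Fin 5) : (x + y) k = x k + y k := rfl
lemma Lsmul_apply (a b : ℝ) (c : ℝ) (x : L a b) (k : Fin 5) : (c • x) k = c * x k := rfl
lemma Lneg_apply (a b : ℝ) (x : L a b) (k : Fin 5) : (-x) k = -(x k) := rfl

def K (a b : ℝ) : LieIdeal ℝ (L a b) where
  carrier := {x | x 0 = 0 ∧ x 1 = 0}
  add_mem' := by
    rintro x y ⟨hx0, hx1⟩ ⟨hy0, hy1⟩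
    constructor <;> show _ + _ = (0:ℝ) <;> simp_all
  zero_mem' := ⟨rfl, rfl⟩
  smul_mem' := by
    rintro c x ⟨hx0, hx1⟩
    constructor <;> show c * _ = (0:ℝ) <;> simp_all
  lie_mem := by
    rintro x m ⟨h0, h1⟩
    exact ⟨rfl, rfl⟩

lemma mem_K (a b : ℝ) (x : L a b) : x ∈ K a b ↔ x 0 = 0 ∧ x 1 = 0 := Iff.rfl

lemma solvable (a b : ℝ) : LieAlgebra.IsSolvable (L a b) := by
  rw [LieAlgebra.isSolvable_iff ℝ]
  refine ⟨2, ?_⟩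
  have h2 : LieAlgebra.derivedSeries ℝ (L a b) 2 =
      ⁅LieAlgebra.derivedSeries ℝ (L a b) 1, LieAlgebra.derivedSeries ℝ (L a b) 1⁆ := rfl
  have hle : LieAlgebra.derivedSeries ℝ (L a b) 1 ≤ K a b := by
    have h1 : LieAlgebra.derivedSeries ℝ (L a b) 1 =
        ⁅(⊤ : LieIdeal ℝ (L a b)), (⊤ : LieIdeal ℝ (L a b))⁆ := rfl
    rw [h1, LieSubmodule.lieIdeal_oper_eq_span, LieSubmodule.lieSpan_le]
    rintro z ⟨x, y, rfl⟩
    exact ⟨rfl, rfl⟩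
  have hKK : ⁅K a b, K a b⁆ = (⊥ : LieIdeal ℝ (L a b)) := by
    rw [LieSubmodule.lie_eq_bot_iff]
    intro x hx m hm
    rw [mem_K] at hx hm
    rw [lbrk]
    funext k
    fin_cases k <;> simp [lbr, hx.1, hx.2, hm.1, hm.2, Lzero_apply]
  rw [h2, eq_bot_iff, ← hKK]
  exact LieSubmodule.mono_lie hle hle

def eqvH1 : L 0 0 ≃ₗ[ℝ] (Fin 5 → ℝ) where
  toFun x := ![x 0, x 1, x 2, x 3, x 4 / 2]
  invFun c := ![c 0, c 1, c 2, c 3, 2 * c 4]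
  map_add' x y := by
    funext k; fin_cases k <;> simp [Ladd_apply] <;> ring
  map_smul' c x := by
    funext k; fin_cases k <;> simp [Lsmul_apply] <;> ring
  left_inv x := by
    funext k; fin_cases k <;> simp <;> ring
  right_inv c := by
    funext k; fin_cases k <;> simp <;> ring

lemma eqvH1_symm_apply (c : Fin 5 → ℝ) :
    (eqvH1.symm : (Fin 5 → ℝ) → L 0 0) c = ![c 0, c 1, c 2, c 3, 2 * c 4] := rfl

set_option maxHeartbeats 1000000 in
lemma isH1 : IsH1 (L 0 0) := by
  refine ⟨Module.Basis.ofEquivFun eqvH1, ?_, ?_, ?_, ?_, ?_, ?_, ?_, ?_, ?_, ?_⟩ <;>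
  · simp only [Module.Basis.coe_ofEquivFun, eqvH1_symm_apply]
    rw [lbrk]
    funext k
    fin_cases k <;>
      simp [lbr, Pi.single_apply, Lzero_apply] <;> norm_num

end GLA6aux
namespace GLA6aux

set_option maxHeartbeats 4000000 in
def eqvH4 (k r al be : ℝ) (hk : k^2 = 3) (h1 : 3*r*(al^2+be^2) = 1) :
    L (3*k*r^2*(3*al^2*be - be^3)) (3*k*r^2*(al^3 - 3*al*be^2)) ≃ₗ[ℝ] (Fin 5 → ℝ) where
  toFun x := ![((1/6)*k*be + (1/6)*al) * x 2 + ((1/6)*k*al + (-1/6)*be) * x 3 + ((-1/18)*k) * x 4, ((2/3)*al) * x 2 + ((-2/3)*be) * x 3 + ((1/9)*k) * x 4, ((-1/6)*k*be + (1/6)*al) * x 2 + ((-1/6)*k*al + (-1/6)*be) * x 3 + ((-1/18)*k) * x 4, ((-1)*k*r*be + 3*r*al) * x 0 + (k*r*al + 3*r*be) * x 1, (2*k*r*be) * x 0 + ((-2)*k*r*al) * x 1]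
  invFun c := ![(0) * c 0 + (0) * c 1 + (0) * c 2 + (al) * c 3 + ((1/2)*k*be + (1/2)*al) * c 4, (0) * c 0 + (0) * c 1 + (0) * c 2 + (be) * c 3 + ((-1/2)*k*al + (1/2)*be) * c 4, (3*k*r*be + 3*r*al) * c 0 + (3*r*al) * c 1 + ((-3)*k*r*be + 3*r*al) * c 2 + (0) * c 3 + (0) * c 4, (3*k*r*al + (-3)*r*be) * c 0 + ((-3)*r*be) * c 1 + ((-3)*k*r*al + (-3)*r*be) * c 2 + (0) * c 3 + (0) * c 4, ((-2)*k) * c 0 + (k) * c 1 + ((-2)*k) * c 2 + (0) * c 3 + (0) * c 4]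
  map_add' x y := by funext j; fin_cases j <;> simp [Ladd_apply] <;> ring
  map_smul' t x := by funext j; fin_cases j <;> simp [Lsmul_apply] <;> ring
  left_inv := by
    intro x; funext j; fin_cases j
    · simp; linear_combination ((-1)*r*al*be*(x 1) + r*be^2*(x 0)) * hk + ((x 0)) * h1
    · simp; linear_combination (r*al^2*(x 1) + (-1)*r*al*be*(x 0)) * hk + ((x 1)) * h1
    · simp; linear_combination (r*al*be*(x 3) + r*be^2*(x 2)) * hk + ((x 2)) * h1
    · simp; linear_combination (r*al^2*(x 3) + r*al*be*(x 2)) * hk + ((x 3)) * h1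
    · simp; linear_combination ((1/3)*(x 4)) * hk
  right_inv := by
    intro c; funext j; fin_cases j
    · simp; linear_combination ((1/2)*r*al^2*(c 0) + (-1/2)*r*al^2*(c 2) + (1/2)*r*be^2*(c 0) + (-1/2)*r*be^2*(c 2) + (1/9)*(c 0) + (-1/18)*(c 1) + (1/9)*(c 2)) * hk + ((2/3)*(c 0) + (1/6)*(c 1) + (-1/3)*(c 2)) * h1
    · simp; linear_combination ((-2/9)*(c 0) + (1/9)*(c 1) + (-2/9)*(c 2)) * hk + ((2/3)*(c 0) + (2/3)*(c 1) + (2/3)*(c 2)) * h1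
    · simp; linear_combination ((-1/2)*r*al^2*(c 0) + (1/2)*r*al^2*(c 2) + (-1/2)*r*be^2*(c 0) + (1/2)*r*be^2*(c 2) + (1/9)*(c 0) + (-1/18)*(c 1) + (1/9)*(c 2)) * hk + ((-1/3)*(c 0) + (1/6)*(c 1) + (2/3)*(c 2)) * h1
    · simp; linear_combination ((-1/2)*r*al^2*(c 4) + (-1/2)*r*be^2*(c 4)) * hk + ((c 3)) * h1
    · simp; linear_combination (r*al^2*(c 4) + r*be^2*(c 4)) * hk + ((c 4)) * h1

lemma eqvH4_symm_apply (k r al be : ℝ) (hk : k^2 = 3) (h1 : 3*r*(al^2+be^2) = 1) (c : Fin 5 → ℝ) :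
    ((eqvH4 k r al be hk h1).symm : (Fin 5 → ℝ) → L (3*k*r^2*(3*al^2*be - be^3)) (3*k*r^2*(al^3 - 3*al*be^2))) c
      = ![(0) * c 0 + (0) * c 1 + (0) * c 2 + (al) * c 3 + ((1/2)*k*be + (1/2)*al) * c 4, (0) * c 0 + (0) * c 1 + (0) * c 2 + (be) * c 3 + ((-1/2)*k*al + (1/2)*be) * c 4, (3*k*r*be + 3*r*al) * c 0 + (3*r*al) * c 1 + ((-3)*k*r*be + 3*r*al) * c 2 + (0) * c 3 + (0) * c 4, (3*k*r*al + (-3)*r*be) * c 0 + ((-3)*r*be) * c 1 + ((-3)*k*r*al + (-3)*r*be) * c 2 + (0) * c 3 + (0) * c 4, ((-2)*k) * c 0 + (k) * c 1 + ((-2)*k) * c 2 + (0) * c 3 + (0) * c 4] := rfl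

set_option maxHeartbeats 1000000 in
lemma XH4_0 (k r al be : ℝ) (hk : k^2 = 3) (h1 : 3*r*(al^2+be^2) = 1) :
    (Module.Basis.ofEquivFun (eqvH4 k r al be hk h1)) 0 = (![0, 0, 3*k*r*be + 3*r*al, 3*k*r*al + (-3)*r*be, (-2)*k] : L (3*k*r^2*(3*al^2*be - be^3)) (3*k*r^2*(al^3 - 3*al*be^2))) := by
  simp only [Module.Basis.coe_ofEquivFun, eqvH4_symm_apply]
  funext j; fin_cases j <;> simp [Pi.single_apply] <;> try ring

set_option maxHeartbeats 1000000 in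
lemma XH4_1 (k r al be : ℝ) (hk : k^2 = 3) (h1 : 3*r*(al^2+be^2) = 1) :
    (Module.Basis.ofEquivFun (eqvH4 k r al be hk h1)) 1 = (![0, 0, 3*r*al, (-3)*r*be, k] : L (3*k*r^2*(3*al^2*be - be^3)) (3*k*r^2*(al^3 - 3*al*be^2))) := by
  simp only [Module.Basis.coe_ofEquivFun, eqvH4_symm_apply]
  funext j; fin_cases j <;> simp [Pi.single_apply] <;> try ring

set_option maxHeartbeats 1000000 in
lemma XH4_2 (k r al be : ℝ) (hk : k^2 = 3) (h1 : 3*r*(al^2+be^2) = 1) :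
    (Module.Basis.ofEquivFun (eqvH4 k r al be hk h1)) 2 = (![0, 0, (-3)*k*r*be + 3*r*al, (-3)*k*r*al + (-3)*r*be, (-2)*k] : L (3*k*r^2*(3*al^2*be - be^3)) (3*k*r^2*(al^3 - 3*al*be^2))) := by
  simp only [Module.Basis.coe_ofEquivFun, eqvH4_symm_apply]
  funext j; fin_cases j <;> simp [Pi.single_apply] <;> try ring

set_option maxHeartbeats 1000000 in
lemma XH4_3 (k r al be : ℝ) (hk : k^2 = 3) (h1 : 3*r*(al^2+be^2) = 1) :
    (Module.Basis.ofEquivFun (eqvH4 k r al be hk h1)) 3 = (![al, be, 0, 0, 0] : L (3*k*r^2*(3*al^2*be - be^3)) (3*k*r^2*(al^3 - 3*al*be^2))) := by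
  simp only [Module.Basis.coe_ofEquivFun, eqvH4_symm_apply]
  funext j; fin_cases j <;> simp [Pi.single_apply] <;> try ring

set_option maxHeartbeats 1000000 in
lemma XH4_4 (k r al be : ℝ) (hk : k^2 = 3) (h1 : 3*r*(al^2+be^2) = 1) :
    (Module.Basis.ofEquivFun (eqvH4 k r al be hk h1)) 4 = (![(1/2)*k*be + (1/2)*al, (-1/2)*k*al + (1/2)*be, 0, 0, 0] : L (3*k*r^2*(3*al^2*be - be^3)) (3*k*r^2*(al^3 - 3*al*be^2))) := by
  simp only [Module.Basis.coe_ofEquivFun, eqvH4_symm_apply]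
  funext j; fin_cases j <;> simp [Pi.single_apply] <;> try ring

set_option maxHeartbeats 4000000 in
lemma lemA (k r al be : ℝ) (hk : k^2 = 3) (h1 : 3*r*(al^2+be^2) = 1) :
    IsH4 (L (3*k*r^2*(3*al^2*be - be^3)) (3*k*r^2*(al^3 - 3*al*be^2))) := by
  refine ⟨Module.Basis.ofEquivFun (eqvH4 k r al be hk h1), ?_, ?_, ?_, ?_, ?_, ?_, ?_, ?_, ?_, ?_⟩
  · -- bracket [0,1]
    rw [lbrk, XH4_0 k r al be hk h1, XH4_1 k r al be hk h1]
    funext m; fin_cases m <;> simp [lbr, Lneg_apply, Lzero_apply]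
  · -- bracket [0,2]
    rw [lbrk, XH4_0 k r al be hk h1, XH4_2 k r al be hk h1]
    funext m; fin_cases m <;> simp [lbr, Lneg_apply, Lzero_apply]
  · -- bracket [0,3]
    rw [lbrk, XH4_0 k r al be hk h1, XH4_3 k r al be hk h1]
    funext m; fin_cases m <;> simp [lbr, Lneg_apply, Lzero_apply]
    · linear_combination (18*k*r^4*al^6*be + 54*k*r^4*al^4*be^3 + 54*k*r^4*al^2*be^5 + 18*k*r^4*be^7 + 9*r^3*al^5 + 18*r^3*al^3*be^2 + 9*r^3*al*be^4) * hk + (18*k*r^3*al^4*be + 36*k*r^3*al^2*be^3 + 18*k*r^3*be^5 + 9*k*r^2*al^2*be + 9*k*r^2*be^3 + 3*k*r*be + 9*r^2*al^3 + 9*r^2*al*be^2 + 3*r*al) * h1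
    · linear_combination (18*k*r^4*al^7 + 54*k*r^4*al^5*be^2 + 54*k*r^4*al^3*be^4 + 18*k*r^4*al*be^6 + (-9)*r^3*al^4*be + (-18)*r^3*al^2*be^3 + (-9)*r^3*be^5) * hk + (18*k*r^3*al^5 + 36*k*r^3*al^3*be^2 + 18*k*r^3*al*be^4 + 9*k*r^2*al^3 + 9*k*r^2*al*be^2 + 3*k*r*al + (-9)*r^2*al^2*be + (-9)*r^2*be^3 + (-3)*r*be) * h1
    · linear_combination ((-2)*k) * h1
  · -- bracket [0,4]
    rw [lbrk, XH4_0 k r al be hk h1, XH4_4 k r al be hk h1]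
    funext m; fin_cases m <;> simp [lbr, Lneg_apply, Lzero_apply]
    · linear_combination ((-9)*k^2*r^4*al^7 + (-27)*k^2*r^4*al^5*be^2 + (-27)*k^2*r^4*al^3*be^4 + (-9)*k^2*r^4*al*be^6 + 9*k*r^4*al^6*be + 27*k*r^4*al^4*be^3 + 27*k*r^4*al^2*be^5 + 9*k*r^4*be^7 + (-9/2)*k*r^3*al^4*be + (-9)*k*r^3*al^2*be^3 + (-9/2)*k*r^3*be^5 + (-27)*r^4*al^7 + (-81)*r^4*al^5*be^2 + (-81)*r^4*al^3*be^4 + (-27)*r^4*al*be^6 + 9*r^3*al^5 + 18*r^3*al^3*be^2 + 9*r^3*al*be^4) * hk + (9*k*r^3*al^4*be + 18*k*r^3*al^2*be^3 + 9*k*r^3*be^5 + (-27)*r^3*al^5 + (-54)*r^3*al^3*be^2 + (-27)*r^3*al*be^4) * h1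
    · linear_combination (9*k^2*r^4*al^6*be + 27*k^2*r^4*al^4*be^3 + 27*k^2*r^4*al^2*be^5 + 9*k^2*r^4*be^7 + 9*k*r^4*al^7 + 27*k*r^4*al^5*be^2 + 27*k*r^4*al^3*be^4 + 9*k*r^4*al*be^6 + (-9/2)*k*r^3*al^5 + (-9)*k*r^3*al^3*be^2 + (-9/2)*k*r^3*al*be^4 + 27*r^4*al^6*be + 81*r^4*al^4*be^3 + 81*r^4*al^2*be^5 + 27*r^4*be^7 + (-9)*r^3*al^4*be + (-18)*r^3*al^2*be^3 + (-9)*r^3*be^5) * hk + (9*k*r^3*al^5 + 18*k*r^3*al^3*be^2 + 9*k*r^3*al*be^4 + 27*r^3*al^4*be + 54*r^3*al^2*be^3 + 27*r^3*be^5) * h1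
    · ring
  · -- bracket [1,2]
    rw [lbrk, XH4_1 k r al be hk h1, XH4_2 k r al be hk h1]
    funext m; fin_cases m <;> simp [lbr, Lneg_apply, Lzero_apply]
  · -- bracket [1,3]
    rw [lbrk, XH4_1 k r al be hk h1, XH4_3 k r al be hk h1]
    funext m; fin_cases m <;> simp [lbr, Lneg_apply, Lzero_apply]
    · linear_combination ((-9)*k*r^4*al^6*be + (-27)*k*r^4*al^4*be^3 + (-27)*k*r^4*al^2*be^5 + (-9)*k*r^4*be^7) * hk + ((-9)*k*r^3*al^4*be + (-18)*k*r^3*al^2*be^3 + (-9)*k*r^3*be^5) * h1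
    · linear_combination ((-9)*k*r^4*al^7 + (-27)*k*r^4*al^5*be^2 + (-27)*k*r^4*al^3*be^4 + (-9)*k*r^4*al*be^6) * hk + ((-9)*k*r^3*al^5 + (-18)*k*r^3*al^3*be^2 + (-9)*k*r^3*al*be^4) * h1
    · ring
  · -- bracket [1,4]
    rw [lbrk, XH4_1 k r al be hk h1, XH4_4 k r al be hk h1]
    funext m; fin_cases m <;> simp [lbr, Lneg_apply, Lzero_apply]
    · linear_combination ((9/2)*k^2*r^4*al^7 + (27/2)*k^2*r^4*al^5*be^2 + (27/2)*k^2*r^4*al^3*be^4 + (9/2)*k^2*r^4*al*be^6 + (-9/2)*k*r^4*al^6*be + (-27/2)*k*r^4*al^4*be^3 + (-27/2)*k*r^4*al^2*be^5 + (-9/2)*k*r^4*be^7 + (27/2)*r^4*al^7 + (81/2)*r^4*al^5*be^2 + (81/2)*r^4*al^3*be^4 + (27/2)*r^4*al*be^6 + (9/2)*r^3*al^5 + 9*r^3*al^3*be^2 + (9/2)*r^3*al*be^4) * hk + ((-9/2)*k*r^3*al^4*be + (-9)*k*r^3*al^2*be^3 + (-9/2)*k*r^3*be^5 + (27/2)*r^3*al^5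 + 27*r^3*al^3*be^2 + (27/2)*r^3*al*be^4 + 9*r^2*al^3 + 9*r^2*al*be^2 + 3*r*al) * h1
    · linear_combination ((-9/2)*k^2*r^4*al^6*be + (-27/2)*k^2*r^4*al^4*be^3 + (-27/2)*k^2*r^4*al^2*be^5 + (-9/2)*k^2*r^4*be^7 + (-9/2)*k*r^4*al^7 + (-27/2)*k*r^4*al^5*be^2 + (-27/2)*k*r^4*al^3*be^4 + (-9/2)*k*r^4*al*be^6 + (-27/2)*r^4*al^6*be + (-81/2)*r^4*al^4*be^3 + (-81/2)*r^4*al^2*be^5 + (-27/2)*r^4*be^7 + (-9/2)*r^3*al^4*be + (-9)*r^3*al^2*be^3 + (-9/2)*r^3*be^5) * hk + ((-9/2)*k*r^3*al^5 + (-9)*k*r^3*al^3*be^2 + (-9/2)*k*r^3*al*be^4 + (-27/2)*r^3*al^4*be + (-27)*r^3*al^2*be^3 + (-27/2)*r^3*be^5 + (-9)*r^2*al^2*be + (-9)*r^2*be^3 + (-3)*r*be) * h1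
    · linear_combination (k) * h1
  · -- bracket [2,3]
    rw [lbrk, XH4_2 k r al be hk h1, XH4_3 k r al be hk h1]
    funext m; fin_cases m <;> simp [lbr, Lneg_apply, Lzero_apply]
    · linear_combination (18*k*r^4*al^6*be + 54*k*r^4*al^4*be^3 + 54*k*r^4*al^2*be^5 + 18*k*r^4*be^7 + (-9)*r^3*al^5 + (-18)*r^3*al^3*be^2 + (-9)*r^3*al*be^4) * hk + (18*k*r^3*al^4*be + 36*k*r^3*al^2*be^3 + 18*k*r^3*be^5 + 9*k*r^2*al^2*be + 9*k*r^2*be^3 + 3*k*r*be + (-9)*r^2*al^3 + (-9)*r^2*al*be^2 + (-3)*r*al) * h1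
    · linear_combination (18*k*r^4*al^7 + 54*k*r^4*al^5*be^2 + 54*k*r^4*al^3*be^4 + 18*k*r^4*al*be^6 + 9*r^3*al^4*be + 18*r^3*al^2*be^3 + 9*r^3*be^5) * hk + (18*k*r^3*al^5 + 36*k*r^3*al^3*be^2 + 18*k*r^3*al*be^4 + 9*k*r^2*al^3 + 9*k*r^2*al*be^2 + 3*k*r*al + 9*r^2*al^2*be + 9*r^2*be^3 + 3*r*be) * h1
    · linear_combination (2*k) * h1
  · -- bracket [2,4]
    rw [lbrk, XH4_2 k r al be hk h1, XH4_4 k r al be hk h1]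
    funext m; fin_cases m <;> simp [lbr, Lneg_apply, Lzero_apply]
    · linear_combination ((-9)*k^2*r^4*al^7 + (-27)*k^2*r^4*al^5*be^2 + (-27)*k^2*r^4*al^3*be^4 + (-9)*k^2*r^4*al*be^6 + 9*k*r^4*al^6*be + 27*k*r^4*al^4*be^3 + 27*k*r^4*al^2*be^5 + 9*k*r^4*be^7 + (9/2)*k*r^3*al^4*be + 9*k*r^3*al^2*be^3 + (9/2)*k*r^3*be^5 + (-27)*r^4*al^7 + (-81)*r^4*al^5*be^2 + (-81)*r^4*al^3*be^4 + (-27)*r^4*al*be^6) * hk + (9*k*r^3*al^4*be + 18*k*r^3*al^2*be^3 + 9*k*r^3*be^5 + 9*k*r^2*al^2*be + 9*k*r^2*be^3 + 3*k*r*be + (-27)*r^3*al^5 + (-54)*r^3*al^3*be^2 + (-27)*r^3*al*be^4 + (-9)*r^2*al^3 + (-9)*r^2*al*be^2 + (-3)*r*al) * h1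
    · linear_combination (9*k^2*r^4*al^6*be + 27*k^2*r^4*al^4*be^3 + 27*k^2*r^4*al^2*be^5 + 9*k^2*r^4*be^7 + 9*k*r^4*al^7 + 27*k*r^4*al^5*be^2 + 27*k*r^4*al^3*be^4 + 9*k*r^4*al*be^6 + (9/2)*k*r^3*al^5 + 9*k*r^3*al^3*be^2 + (9/2)*k*r^3*al*be^4 + 27*r^4*al^6*be + 81*r^4*al^4*be^3 + 81*r^4*al^2*be^5 + 27*r^4*be^7) * hk + (9*k*r^3*al^5 + 18*k*r^3*al^3*be^2 + 9*k*r^3*al*be^4 + 9*k*r^2*al^3 + 9*k*r^2*al*be^2 + 3*k*r*al + 27*r^3*al^4*be + 54*r^3*al^2*be^3 + 27*r^3*be^5 + 9*r^2*al^2*be + 9*r^2*be^3 + 3*r*be) * h1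
    · linear_combination (2*k) * h1
  · -- bracket [3,4]
    rw [lbrk, XH4_3 k r al be hk h1, XH4_4 k r al be hk h1]
    funext m; fin_cases m <;> simp [lbr, Lneg_apply, Lzero_apply]

end GLA6aux
namespace GLA6aux

set_option maxHeartbeats 1000000 in
lemma exists_params (a b : ℝ) (h : ¬(a = 0 ∧ b = 0)) :
    ∃ k r al be : ℝ, k^2 = 3 ∧ 3*r*(al^2+be^2) = 1 ∧
      a = 3*k*r^2*(3*al^2*be - be^3) ∧ b = 3*k*r^2*(al^3 - 3*al*be^2) := by
  set c : ℂ := ⟨a, b⟩ with hcdef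
  have hc : c ≠ 0 := by
    intro hc0
    apply h
    rw [Complex.ext_iff] at hc0
    exact ⟨hc0.1, hc0.2⟩
  set u : ℂ := Complex.I * (starRingEnd ℂ) c with hudef
  have hu : u ≠ 0 := by
    simp [hudef, Complex.I_ne_zero, hc]
  set ζ : ℂ := Complex.exp (Complex.log u / 3) with hzdef
  have hz3 : ζ ^ 3 = u := by
    rw [hzdef, ← Complex.exp_nat_mul]
    rw [show ((3:ℕ):ℂ) * (Complex.log u / 3) = Complex.log u by push_cast; ring]
    exact Complex.exp_log hu
  have hzne : ζ ≠ 0 := Complex.exp_ne_zero _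
  set al₀ := ζ.re with hal0
  set be₀ := ζ.im with hbe0
  set n₀ := al₀^2 + be₀^2 with hn0def
  have hn0 : 0 < n₀ := by
    rcases (by rwa [Ne, Complex.ext_iff, not_and_or, Complex.zero_re, Complex.zero_im] at hzne :
        ζ.re ≠ 0 ∨ ζ.im ≠ 0) with h0 | h0 <;> positivity
  set ρ := a^2 + b^2 with hrho
  have hρ : 0 < ρ := by
    rw [not_and_or] at h
    rcases h with h0 | h0 <;> positivity
  have hnsq : Complex.normSq ζ = n₀ := by
    rw [Complex.normSq_apply, hn0def, hal0, hbe0]; ring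
  have hn3 : n₀^3 = ρ := by
    have h1 : Complex.normSq (ζ^3) = Complex.normSq ζ ^ 3 := by
      rw [map_pow]
    rw [hz3, hnsq] at h1
    rw [← h1, hudef, map_mul, Complex.normSq_I, Complex.normSq_conj, one_mul,
      Complex.normSq_apply]
    simp [hcdef, hrho]
    try ring
  have hzre : (ζ^3).re = al₀^3 - 3*al₀*be₀^2 := by
    simp [pow_succ, Complex.mul_re, Complex.mul_im, hal0, hbe0]; ring
  have hzim : (ζ^3).im = 3*al₀^2*be₀ - be₀^3 := by
    simp [pow_succ, Complex.mul_re, Complex.mul_im, hal0, hbe0]; ring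
  have hure : u.re = b := by simp [hudef, hcdef, Complex.mul_re]
  have huim : u.im = a := by simp [hudef, hcdef, Complex.mul_im]
  have hre : al₀^3 - 3*al₀*be₀^2 = b := by rw [← hzre, hz3, hure]
  have him : 3*al₀^2*be₀ - be₀^3 = a := by rw [← hzim, hz3, huim]
  set t := (Real.sqrt (3*ρ*n₀))⁻¹ with htdef
  have hsq : Real.sqrt (3*ρ*n₀) > 0 := Real.sqrt_pos.mpr (by positivity)
  have htpos : 0 < t := by positivity
  have ht2 : t^2 * (3*ρ*n₀) = 1 := by
    rw [htdef, inv_pow, Real.sq_sqrt (by positivity : (0:ℝ) ≤ 3*ρ*n₀)]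
    exact inv_mul_cancel₀ (by positivity)
  have h9 : 9*ρ^4*t^6 = 1/3 := by
    linear_combination (1/3) * ((3*ρ*n₀*t^2)^2 + 3*ρ*n₀*t^2 + 1) * ht2 - 9*ρ^3*t^6 * hn3
  have hktne : (3*ρ^2*t^3) ≠ 0 := by positivity
  refine ⟨(3*ρ^2*t^3)⁻¹, ρ, t*al₀, t*be₀, ?_, ?_, ?_, ?_⟩
  · rw [inv_pow]
    rw [inv_eq_iff_eq_inv]
    linear_combination h9
  · linear_combination 3*ρ*t^2*(by ring : al₀^2 + be₀^2 = al₀^2+be₀^2) + ht2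
  · have hs1 : 3*(3*ρ^2*t^3)⁻¹*ρ^2*t^3 = 1 := by field_simp
    linear_combination (-(3*(3*ρ^2*t^3)⁻¹*ρ^2*t^3)) * him - a * hs1
  · have hs1 : 3*(3*ρ^2*t^3)⁻¹*ρ^2*t^3 = 1 := by field_simp
    linear_combination (-(3*(3*ρ^2*t^3)⁻¹*ρ^2*t^3)) * hre - b * hs1

end GLA6aux
theorem exists_good_lie_algebra6 (a b : ℝ) :
    ∃ (V : Type) (i₁ : LieRing V) (i₂ : @LieAlgebra ℝ V _ i₁),
      @GoodLieAlgebra6 a b V i₁ i₂ := by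
  refine ⟨GLA6aux.L a b, inferInstance, inferInstance, ?_⟩
  refine ⟨GLA6aux.solvable a b, GLA6aux.eB a b,
    (GLA6aux.structure_eqs a b).1, (GLA6aux.structure_eqs a b).2.1,
    (GLA6aux.structure_eqs a b).2.2.1, (GLA6aux.structure_eqs a b).2.2.2.1,
    (GLA6aux.structure_eqs a b).2.2.2.2, GLA6aux.hypo a b, ?_, ?_⟩
  · rintro ⟨rfl, rfl⟩
    exact GLA6aux.isH1
  · intro hab
    obtain ⟨k, r, al, be, hk, h1, ha, hb⟩ := GLA6aux.exists_params a b hab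
    rw [ha, hb]
    exact GLA6aux.lemA k r al be hk h1

end
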